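/- For σ > 0 let Y₁, Y₂ be independent Gaussian random variables, each with mean 1 and variance σ², and let h(y) = tanh(y/σ²). Then lim_{σ→∞} σ⁴·E[h(Y₁)·h(Y₂)] = 1; that is, the mean spread after the addition-mod-2 (multiplication) step of recursive decoding decays like σ^{−4}, matching the mean spread of an AWGN channel with noise power σ⁴. -/

import Mathlib

open MeasureTheory ProbabilityTheory Filter

open scoped ENNReal NNReal

section Aux

open Real

lemma continuous_tanh : Continuous Real.tanh := by
  have : Real.tanh = fun x => Real.sinh x / Real.cosh x := by
    funext x; exact Real.tanh_eq_sinh_div_cosh x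
  rw [this]
  exact Real.continuous_sinh.div Real.continuous_cosh fun x => (Real.cosh_pos x).ne'

lemma nonneg_on_Ici (f f' : ℝ → ℝ) (hd : ∀ x, HasDerivAt f (f' x) x) (h0 : f 0 = 0)
    (hf' : ∀ x, 0 < x → 0 ≤ f' x) : ∀ x, 0 ≤ x → 0 ≤ f x := by
  intro x hx
  have mono : MonotoneOn f (Set.Ici 0) := by
    apply monotoneOn_of_deriv_nonneg (convex_Ici 0)
    · exact fun y _ => (hd y).continuousAt.continuousWithinAt
    · intro y hy
      rw [interior_Ici] at hy
      exact (hd y).differentiableAt.differentiableWithinAt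
    · intro y hy
      rw [interior_Ici] at hy
      rw [(hd y).deriv]
      exact hf' y hy
  calc (0:ℝ) = f 0 := h0.symm
  _ ≤ f x := mono Set.self_mem_Ici hx hx

lemma sinh_le_mul_cosh {x : ℝ} (hx : 0 ≤ x) : Real.sinh x ≤ x * Real.cosh x := by
  have h := nonneg_on_Ici (fun y => y * Real.cosh y - Real.sinh y) (fun y => y * Real.sinh y)
    (fun y => by
      have h := ((hasDerivAt_id y).mul (Real.hasDerivAt_cosh y)).sub (Real.hasDerivAt_sinh y)
      exact h.congr_deriv (by simp only [id, one_mul]; ring))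
    (by simp)
    (fun y hy => mul_nonneg hy.le (Real.sinh_nonneg_iff.2 hy.le)) x hx
  have h' : 0 ≤ x * Real.cosh x - Real.sinh x := h
  linarith

lemma tanh_le_self {x : ℝ} (hx : 0 ≤ x) : Real.tanh x ≤ x := by
  rw [Real.tanh_eq_sinh_div_cosh, div_le_iff₀ (Real.cosh_pos x)]
  exact sinh_le_mul_cosh hx

lemma sub_tanh_le {x : ℝ} (hx : 0 ≤ x) : x - Real.tanh x ≤ x^3/3 := by
  have key : 0 ≤ Real.sinh x - (x - x^3/3) * Real.cosh x := by
    refine nonneg_on_Ici (fun y => Real.sinh y - (y - y^3/3) * Real.cosh y)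
      (fun y => y^2 * Real.cosh y - (y - y^3/3) * Real.sinh y)
      (fun y => by
        have h := (Real.hasDerivAt_sinh y).sub
          (((hasDerivAt_id y).sub ((hasDerivAt_pow 3 y).div_const 3)).mul
            (Real.hasDerivAt_cosh y))
        refine h.congr_deriv ?_
        simp only [Pi.sub_apply, id]
        push_cast
        ring)
      (by simp)
      (fun y hy => ?_) x hx
    have h1 : Real.sinh y ≤ y * Real.cosh y := sinh_le_mul_cosh hy.le
    have h2 : 0 ≤ Real.sinh y := Real.sinh_nonneg_iff.2 hy.le
    have h3 : (y - y^3/3) * Real.sinh y ≤ y * Real.sinh y :=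
      mul_le_mul_of_nonneg_right (by nlinarith [pow_nonneg hy.le 3]) h2
    have h4 : y * Real.sinh y ≤ y * (y * Real.cosh y) := mul_le_mul_of_nonneg_left h1 hy.le
    nlinarith
  have hc := Real.cosh_pos x
  rw [Real.tanh_eq_sinh_div_cosh]
  have : x - x^3/3 ≤ Real.sinh x / Real.cosh x := by
    rw [le_div_iff₀ hc]
    linarith
  linarith

lemma abs_tanh_sub_self_le (x : ℝ) : |Real.tanh x - x| ≤ |x|^3/3 := by
  have main : ∀ y : ℝ, 0 ≤ y → |Real.tanh y - y| ≤ |y|^3/3 := by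
    intro y hy
    rw [abs_of_nonneg hy, abs_sub_comm,
      abs_of_nonneg (by linarith [tanh_le_self hy] : (0:ℝ) ≤ y - Real.tanh y)]
    exact sub_tanh_le hy
  rcases le_or_gt 0 x with hx | hx
  · exact main x hx
  · have h := main (-x) (by linarith)
    rw [Real.tanh_neg] at h
    have e1 : |Real.tanh x - x| = |-Real.tanh x - -x| := by
      rw [← abs_neg]; congr 1; ring
    have e2 : |x| = |-x| := (abs_neg x).symm
    rw [e1, e2]
    exact h

lemma abs_tanh_le_one (x : ℝ) : |Real.tanh x| ≤ 1 := by
  have hc := Real.cosh_pos x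
  have hs : |Real.sinh x| ≤ Real.cosh x := by
    nlinarith [Real.cosh_sq x, abs_nonneg (Real.sinh x), sq_abs (Real.sinh x)]
  rw [Real.tanh_eq_sinh_div_cosh, abs_div, abs_of_pos hc, div_le_one hc]
  exact hs

end Aux

section Gauss

lemma gauss_map_eq {σ : ℝ} (hσ : 0 < σ) :
    (gaussianReal 0 1).map (fun x => σ * x + 1) = gaussianReal 1 (σ^2).toNNReal := by
  have h1 : (fun x : ℝ => σ * x + 1) = (fun y => y + 1) ∘ (fun x => σ * x) := rfl
  rw [h1, ← Measure.map_map (measurable_add_const 1) (measurable_const_mul σ)]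
  have h2 : (gaussianReal 0 1).map (fun x => σ * x) = gaussianReal 0 (σ^2).toNNReal := by
    have h3 : ((⟨σ^2, sq_nonneg σ⟩ : ℝ≥0) * 1) = (σ^2).toNNReal :=
      NNReal.coe_injective (by simp [Real.coe_toNNReal _ (sq_nonneg σ)]; rfl)
    have h4 := gaussianReal_map_const_mul (μ := (0:ℝ)) (v := 1) σ
    rw [mul_zero] at h4
    rw [← h3]
    exact h4
  rw [h2]
  have := gaussianReal_map_add_const (μ := 0) (v := (σ^2).toNNReal) 1
  simpa using this

lemma integral_gauss01 (f : ℝ → ℝ) :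
    ∫ x, f x ∂(gaussianReal 0 1) = ∫ x, gaussianPDFReal 0 1 x * f x := by
  rw [gaussianReal_of_var_ne_zero 0 one_ne_zero]
  have h : gaussianPDF 0 1 = fun x => ((gaussianPDFReal 0 1 x).toNNReal : ℝ≥0∞) := rfl
  rw [h, integral_withDensity_eq_integral_smul (measurable_gaussianPDFReal 0 1).real_toNNReal]
  congr 1
  ext x
  rw [NNReal.smul_def, smul_eq_mul, Real.coe_toNNReal _ (gaussianPDFReal_nonneg 0 1 x)]

lemma pdf01_eq (x : ℝ) :
    gaussianPDFReal 0 1 x = (Real.sqrt (2 * Real.pi))⁻¹ * Real.exp (-(1/2) * x^2) := by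
  simp only [gaussianPDFReal, NNReal.coe_one, mul_one, sub_zero]
  ring_nf

lemma pdf01_le (x : ℝ) : gaussianPDFReal 0 1 x ≤ Real.exp (-(1/2) * x^2) := by
  rw [pdf01_eq]
  have h1 : (1:ℝ) ≤ Real.sqrt (2 * Real.pi) := by
    rw [show (1:ℝ) = Real.sqrt 1 by simp]
    exact Real.sqrt_le_sqrt (by nlinarith [Real.pi_gt_three])
  have h2 : (Real.sqrt (2 * Real.pi))⁻¹ ≤ 1 := by
    rw [inv_le_one_iff₀]; right; exact h1
  nlinarith [Real.exp_pos (-(1/2) * x^2), Real.sqrt_nonneg (2 * Real.pi),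
    inv_nonneg.2 (Real.sqrt_nonneg (2 * Real.pi))]

lemma integrable_poly_gauss : Integrable (fun x : ℝ => (|x|+1)^3) (gaussianReal 0 1) := by
  rw [gaussianReal_of_var_ne_zero 0 one_ne_zero,
    integrable_withDensity_iff (measurable_gaussianPDF 0 1)
      (ae_of_all _ fun x => ENNReal.ofReal_lt_top)]
  have hpdf : ∀ x : ℝ, (gaussianPDF 0 1 x).toReal = gaussianPDFReal 0 1 x := fun x =>
    ENNReal.toReal_ofReal (gaussianPDFReal_nonneg 0 1 x)
  simp_rw [hpdf]
  apply Integrable.mono'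
    (g := fun x => 8 * Real.exp (-(1/2) * x^2) + 512 * Real.exp (-(1/4) * x^2))
  · exact ((integrable_exp_neg_mul_sq (by norm_num : (0:ℝ) < 1/2)).const_mul 8).add
      ((integrable_exp_neg_mul_sq (by norm_num : (0:ℝ) < 1/4)).const_mul 512)
  · exact (((measurable_abs.add measurable_const).pow_const 3).mul
      (measurable_gaussianPDFReal 0 1)).aestronglyMeasurable
  · refine ae_of_all _ fun x => ?_
    have hp0 : 0 ≤ gaussianPDFReal 0 1 x := gaussianPDFReal_nonneg 0 1 x
    have hple := pdf01_le x
    have hc0 : (0:ℝ) ≤ (|x|+1)^3 := by positivity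
    have h1 : (|x|+1)^3 ≤ 8 + 8*x^4 := by
      nlinarith [abs_nonneg x, sq_nonneg (|x|-1), sq_nonneg (x^2-1), sq_nonneg (x^2 - |x|),
        sq_abs x, sq_nonneg (|x| * (|x| - 1))]
    have h2 : x^4 ≤ 64 * Real.exp ((1/4) * x^2) := by
      have h3 := Real.add_one_le_exp ((1/8) * x^2)
      have h4 : ((1/8) * x^2)^2 ≤ (Real.exp ((1/8)*x^2))^2 := by
        have h5 : (0:ℝ) ≤ (1/8) * x^2 := by positivity
        nlinarith
      have h6 : Real.exp ((1/8)*x^2) ^ 2 = Real.exp ((1/4) * x^2) := by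
        rw [← Real.exp_nat_mul]; push_cast; ring_nf
      nlinarith
    have e1 : Real.exp ((1/4)*x^2) * Real.exp (-(1/2)*x^2) = Real.exp (-(1/4)*x^2) := by
      rw [← Real.exp_add]; ring_nf
    have hnorm : ‖(|x|+1)^3 * gaussianPDFReal 0 1 x‖ = (|x|+1)^3 * gaussianPDFReal 0 1 x := by
      rw [Real.norm_eq_abs, abs_of_nonneg (mul_nonneg hc0 hp0)]
    rw [hnorm]
    calc (|x|+1)^3 * gaussianPDFReal 0 1 x
        ≤ (8 + 8*x^4) * Real.exp (-(1/2) * x^2) := by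
          apply mul_le_mul h1 hple hp0 (by nlinarith [sq_nonneg (x^2)])
      _ = 8 * Real.exp (-(1/2) * x^2) + 8 * (x^4 * Real.exp (-(1/2) * x^2)) := by ring
      _ ≤ 8 * Real.exp (-(1/2) * x^2) + 512 * Real.exp (-(1/4) * x^2) := by
          have := mul_le_mul_of_nonneg_right h2 (Real.exp_pos (-(1/2) * x^2)).le
          rw [mul_assoc, e1] at this
          linarith

lemma integrable_id_gauss : Integrable (fun x : ℝ => x) (gaussianReal 0 1) := by
  apply integrable_poly_gauss.mono' measurable_id.aestronglyMeasurable
  refine ae_of_all _ fun x => ?_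
  simp only [id_eq]
  rw [Real.norm_eq_abs]
  nlinarith [abs_nonneg x, pow_nonneg (abs_nonneg x) 3, sq_nonneg |x|]

lemma mean_gauss01 : ∫ x, x ∂(gaussianReal 0 1) = 0 := by
  rw [integral_gauss01]
  have hodd : ∀ x : ℝ, gaussianPDFReal 0 1 (-x) * (-x) = -(gaussianPDFReal 0 1 x * x) := by
    intro x
    rw [pdf01_eq, pdf01_eq]
    ring_nf
  have h := integral_neg_eq_self (fun x => gaussianPDFReal 0 1 x * x) (volume : Measure ℝ)
  simp_rw [hodd, integral_neg] at h
  linarith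

end Gauss

lemma key_tendsto :
    Tendsto (fun σ : ℝ => σ^2 * ∫ y, Real.tanh (y / σ^2) ∂(gaussianReal 1 (σ^2).toNNReal))
      atTop (nhds 1) := by
  set K : ℝ := ∫ x, (|x|+1)^3 ∂(gaussianReal 0 1) with hK
  have hbound : ∀ σ : ℝ, 1 ≤ σ →
      |σ^2 * (∫ y, Real.tanh (y / σ^2) ∂(gaussianReal 1 (σ^2).toNNReal)) - 1| ≤ K / (3*σ) := by
    intro σ hσ
    have hσ0 : (0:ℝ) < σ := lt_of_lt_of_le one_pos hσ
    have hσ2 : (0:ℝ) < σ^2 := by positivity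
    -- transfer to standard gaussian
    rw [← gauss_map_eq hσ0, integral_map (f := fun y => Real.tanh (y / σ^2))
      ((measurable_const_mul σ).add_const 1).aemeasurable
      (Continuous.aestronglyMeasurable (by
        exact continuous_tanh.comp (continuous_id.div_const _)))]
    -- now integral over gaussianReal 0 1
    set γ := gaussianReal 0 1
    have intT : Integrable (fun x => σ^2 * Real.tanh ((σ * x + 1) / σ^2)) γ := by
      apply (integrable_const (σ^2)).mono'
      · have mtanh : Measurable fun x : ℝ => Real.tanh ((σ * x + 1) / σ^2) :=
          continuous_tanh.measurable.comp (((measurable_const_mul σ).add_const 1).div_const _)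
        exact (measurable_const.mul mtanh).aestronglyMeasurable
      · refine ae_of_all _ fun x => ?_
        rw [Real.norm_eq_abs, abs_mul, abs_of_pos hσ2]
        nlinarith [abs_tanh_le_one ((σ * x + 1) / σ^2)]
    have intL : Integrable (fun x : ℝ => σ * x + 1) γ :=
      (integrable_id_gauss.const_mul σ).add (integrable_const 1)
    have hmean : ∫ x, (σ * x + 1) ∂γ = 1 := by
      rw [integral_add (integrable_id_gauss.const_mul σ) (integrable_const 1),
        integral_const_mul, mean_gauss01]
      simp
    have e1 : σ^2 * (∫ x, Real.tanh ((σ * x + 1) / σ^2) ∂γ) - 1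
        = ∫ x, (σ^2 * Real.tanh ((σ * x + 1) / σ^2) - (σ * x + 1)) ∂γ := by
      rw [integral_sub intT intL, integral_const_mul, hmean]
    rw [e1]
    have pb : ∀ x : ℝ, ‖σ^2 * Real.tanh ((σ * x + 1) / σ^2) - (σ * x + 1)‖
        ≤ (1/(3*σ)) * (|x|+1)^3 := by
      intro x
      have h1 := abs_tanh_sub_self_le ((σ * x + 1) / σ^2)
      have e2 : σ^2 * Real.tanh ((σ * x + 1) / σ^2) - (σ * x + 1)
          = σ^2 * (Real.tanh ((σ * x + 1) / σ^2) - (σ * x + 1) / σ^2) := by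
        field_simp
      rw [Real.norm_eq_abs, e2, abs_mul, abs_of_pos hσ2]
      have h2 : |σ * x + 1| ≤ σ * (|x|+1) := by
        calc |σ * x + 1| ≤ |σ * x| + 1 := by
              have := abs_add_le (σ * x) 1
              simpa using this
        _ = σ * |x| + 1 := by rw [abs_mul, abs_of_pos hσ0]
        _ ≤ σ * (|x|+1) := by nlinarith
      have h3 : |(σ * x + 1) / σ^2| = |σ * x + 1| / σ^2 := by
        rw [abs_div, abs_of_pos hσ2]
      have h4 : |(σ * x + 1) / σ^2|^3 ≤ (σ * (|x|+1))^3 / (σ^2)^3 := by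
        rw [h3, div_pow]
        gcongr
      have h5 : σ^2 * |Real.tanh ((σ * x + 1) / σ^2) - (σ * x + 1) / σ^2|
          ≤ σ^2 * (|(σ * x + 1) / σ^2|^3 / 3) := by
        apply mul_le_mul_of_nonneg_left h1 hσ2.le
      calc σ^2 * |Real.tanh ((σ * x + 1) / σ^2) - (σ * x + 1) / σ^2|
          ≤ σ^2 * ((σ * (|x|+1))^3 / (σ^2)^3 / 3) := by
            apply h5.trans; gcongr
        _ = (1/(3*σ)) * (|x|+1)^3 := by
            field_simp
    calc |∫ x, (σ^2 * Real.tanh ((σ * x + 1) / σ^2) - (σ * x + 1)) ∂γ|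
        = ‖∫ x, (σ^2 * Real.tanh ((σ * x + 1) / σ^2) - (σ * x + 1)) ∂γ‖ :=
          (Real.norm_eq_abs _).symm
      _ ≤ ∫ x, ‖σ^2 * Real.tanh ((σ * x + 1) / σ^2) - (σ * x + 1)‖ ∂γ :=
          norm_integral_le_integral_norm _
      _ ≤ ∫ x, (1/(3*σ)) * (|x|+1)^3 ∂γ := by
          apply integral_mono (intT.sub intL).norm (integrable_poly_gauss.const_mul _) pb
      _ = K / (3*σ) := by
          rw [integral_const_mul, hK]
          ring
  -- squeeze
  have hlim : Tendsto (fun σ : ℝ => K / (3*σ)) atTop (nhds 0) :=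
    Tendsto.div_atTop tendsto_const_nhds (tendsto_id.const_mul_atTop (by norm_num))
  have h0 : Tendsto (fun σ : ℝ =>
      σ^2 * (∫ y, Real.tanh (y / σ^2) ∂(gaussianReal 1 (σ^2).toNNReal)) - 1) atTop (nhds 0) := by
    apply squeeze_zero_norm' _ hlim
    filter_upwards [eventually_ge_atTop (1:ℝ)] with σ hσ
    exact hbound σ hσ
  have := h0.add (tendsto_const_nhds :
    Tendsto (fun _ : ℝ => (1:ℝ)) atTop (nhds 1))
  simpa using this

theorem product_spread_asymptotics :
    Tendsto (fun σ : ℝ =>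
        σ^4 * ∫ p : ℝ × ℝ, Real.tanh (p.1 / σ^2) * Real.tanh (p.2 / σ^2)
          ∂((gaussianReal 1 (σ^2).toNNReal).prod (gaussianReal 1 (σ^2).toNNReal)))
      atTop (nhds 1) := by
  have heq : ∀ σ : ℝ,
      σ^4 * ∫ p : ℝ × ℝ, Real.tanh (p.1 / σ^2) * Real.tanh (p.2 / σ^2)
          ∂((gaussianReal 1 (σ^2).toNNReal).prod (gaussianReal 1 (σ^2).toNNReal))
        = (σ^2 * ∫ y, Real.tanh (y / σ^2) ∂(gaussianReal 1 (σ^2).toNNReal))^2 := by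
    intro σ
    rw [integral_prod_mul (f := fun y => Real.tanh (y / σ^2))
      (g := fun y => Real.tanh (y / σ^2))]
    ring
  simp_rw [heq]
  have := key_tendsto.pow 2
  simpa using this
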